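/- Let A and B be finite-dimensional k-algebras with A ≤_J B, and let n be a positive integer. Then T_n(A) ≤_J T_n(B), where T_n(A) denotes the k-algebra of upper triangular n×n matrices with entries in A (the subalgebra of the full n×n matrix algebra over A consisting of matrices whose (i,j) entry vanishes whenever i > j). In particular, if A ∼_J B then T_n(A) ∼_J T_n(B). -/

import Mathlib

set_option linter.unusedSectionVars false

open scoped TensorProduct
open MulOpposite

universe u

namespace JJ

noncomputable section

section BalTensor

variable (B : Type u) [Ring B] (M : Type u) [AddCommGroup M] [Module Bᵐᵒᵖ M]
  (N : Type u) [AddCommGroup N] [Module B N]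

/-- The subgroup of relations defining the balanced tensor product `M ⊗_B N`. -/
def balRel : Submodule ℤ (TensorProduct ℤ M N) :=
  Submodule.span ℤ { z | ∃ (b : B) (m : M) (n : N),
    z = (op b • m) ⊗ₜ[ℤ] n - m ⊗ₜ[ℤ] (b • n) }

/-- The balanced tensor product `M ⊗_B N` of a right `B`-module `M` and a left `B`-module `N`. -/
def BalTensor : Type u := TensorProduct ℤ M N ⧸ balRel B M N

instance : AddCommGroup (BalTensor B M N) :=
  inferInstanceAs (AddCommGroup (TensorProduct ℤ M N ⧸ balRel B M N))

/-- The canonical projection onto the balanced tensor product. -/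
def BalTensor.mk : TensorProduct ℤ M N →+ BalTensor B M N :=
  (balRel B M N).mkQ.toAddMonoidHom

/-- The image of a pure tensor in the balanced tensor product. -/
def BalTensor.tmul (m : M) (n : N) : BalTensor B M N := BalTensor.mk B M N (m ⊗ₜ n)

lemma BalTensor.mk_surjective : Function.Surjective (BalTensor.mk B M N) :=
  Submodule.mkQ_surjective _

lemma BalTensor.balance (b : B) (m : M) (n : N) :
    BalTensor.tmul B M N (op b • m) n = BalTensor.tmul B M N m (b • n) := by
  have h : ((op b • m) ⊗ₜ[ℤ] n - m ⊗ₜ[ℤ] (b • n)) ∈ balRel B M N :=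
    Submodule.subset_span ⟨b, m, n, rfl⟩
  have h2 := (Submodule.Quotient.mk_eq_zero (balRel B M N)).2 h
  rw [Submodule.Quotient.mk_sub] at h2
  exact sub_eq_zero.1 h2

end BalTensor

section LeftAction

variable (B : Type u) [Ring B] (M : Type u) [AddCommGroup M] [Module Bᵐᵒᵖ M]
  (N : Type u) [AddCommGroup N] [Module B N]
  (A : Type u) [Ring A] [Module A M] [SMulCommClass A Bᵐᵒᵖ M]

/-- The left action of `a : A` on the plain tensor product. -/
def lActAux (a : A) : TensorProduct ℤ M N →ₗ[ℤ] TensorProduct ℤ M N :=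
  LinearMap.rTensor N (DistribMulAction.toAddMonoidHom M a).toIntLinearMap

lemma lActAux_tmul (a : A) (m : M) (n : N) :
    lActAux M N A a (m ⊗ₜ n) = (a • m) ⊗ₜ n := by
  rfl

lemma lActAux_rel (a : A) :
    balRel B M N ≤ (balRel B M N).comap (lActAux M N A a) := by
  rw [balRel, Submodule.span_le]
  rintro z ⟨b, m, n, rfl⟩
  simp only [SetLike.mem_coe, Submodule.mem_comap, map_sub, lActAux_tmul]
  rw [smul_comm a (op b) m]
  exact Submodule.subset_span ⟨b, a • m, n, rfl⟩

/-- The left action of `A` on the balanced tensor product. -/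
def lAct (a : A) : BalTensor B M N →ₗ[ℤ] BalTensor B M N :=
  Submodule.mapQ _ _ (lActAux M N A a) (lActAux_rel B M N A a)

instance : SMul A (BalTensor B M N) := ⟨fun a x => lAct B M N A a x⟩

lemma BalTensor.lsmul_mk (a : A) (x : TensorProduct ℤ M N) :
    a • (BalTensor.mk B M N x) = BalTensor.mk B M N (lActAux M N A a x) := rfl

lemma BalTensor.lsmul_tmul (a : A) (m : M) (n : N) :
    a • (BalTensor.tmul B M N m n) = BalTensor.tmul B M N (a • m) n := by
  rw [BalTensor.tmul, BalTensor.lsmul_mk, lActAux_tmul]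
  rfl

instance BalTensor.instLeftModule : Module A (BalTensor B M N) where
  one_smul x := by
    obtain ⟨y, rfl⟩ := BalTensor.mk_surjective B M N x
    rw [BalTensor.lsmul_mk]
    congr 1
    have h : lActAux M N A (1 : A) = LinearMap.id :=
      TensorProduct.ext' fun m n => by show ((1 : A) • m) ⊗ₜ[ℤ] n = m ⊗ₜ[ℤ] n; rw [one_smul]
    rw [h]; rfl
  mul_smul a b x := by
    obtain ⟨y, rfl⟩ := BalTensor.mk_surjective B M N x
    rw [BalTensor.lsmul_mk, BalTensor.lsmul_mk, BalTensor.lsmul_mk]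
    congr 1
    have h : lActAux M N A (a * b) = (lActAux M N A a).comp (lActAux M N A b) :=
      TensorProduct.ext' fun m n => by
        show ((a * b) • m) ⊗ₜ[ℤ] n = (a • b • m) ⊗ₜ[ℤ] n; rw [mul_smul]
    rw [h]; rfl
  smul_zero a := map_zero (lAct B M N A a)
  smul_add a x y := map_add (lAct B M N A a) x y
  add_smul a b x := by
    obtain ⟨y, rfl⟩ := BalTensor.mk_surjective B M N x
    rw [BalTensor.lsmul_mk, BalTensor.lsmul_mk, BalTensor.lsmul_mk, ← map_add]
    congr 1
    have h : lActAux M N A (a + b) = lActAux M N A a + lActAux M N A b :=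
      TensorProduct.ext' fun m n => by
        show ((a + b) • m) ⊗ₜ[ℤ] n = (a • m) ⊗ₜ[ℤ] n + (b • m) ⊗ₜ[ℤ] n
        rw [add_smul, TensorProduct.add_tmul]
    rw [h]; rfl
  zero_smul x := by
    obtain ⟨y, rfl⟩ := BalTensor.mk_surjective B M N x
    rw [BalTensor.lsmul_mk]
    have h : lActAux M N A (0 : A) = 0 :=
      TensorProduct.ext' fun m n => by
        show ((0 : A) • m) ⊗ₜ[ℤ] n = 0; rw [zero_smul, TensorProduct.zero_tmul]
    rw [h]
    simp

end LeftAction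

section RightAction

variable (B : Type u) [Ring B] (M : Type u) [AddCommGroup M] [Module Bᵐᵒᵖ M]
  (N : Type u) [AddCommGroup N] [Module B N]
  (C : Type u) [Ring C] [Module Cᵐᵒᵖ N] [SMulCommClass B Cᵐᵒᵖ N]

/-- The right action of `c : Cᵐᵒᵖ` on the plain tensor product. -/
def rActAux (c : Cᵐᵒᵖ) : TensorProduct ℤ M N →ₗ[ℤ] TensorProduct ℤ M N :=
  LinearMap.lTensor M (DistribMulAction.toAddMonoidHom N c).toIntLinearMap

lemma rActAux_tmul (c : Cᵐᵒᵖ) (m : M) (n : N) :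
    rActAux M N C c (m ⊗ₜ n) = m ⊗ₜ (c • n) := by
  rfl

lemma rActAux_rel (c : Cᵐᵒᵖ) :
    balRel B M N ≤ (balRel B M N).comap (rActAux M N C c) := by
  rw [balRel, Submodule.span_le]
  rintro z ⟨b, m, n, rfl⟩
  simp only [SetLike.mem_coe, Submodule.mem_comap, map_sub, rActAux_tmul]
  rw [← smul_comm b c n]
  exact Submodule.subset_span ⟨b, m, c • n, rfl⟩

/-- The right action of `Cᵐᵒᵖ` on the balanced tensor product. -/
def rAct (c : Cᵐᵒᵖ) : BalTensor B M N →ₗ[ℤ] BalTensor B M N :=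
  Submodule.mapQ _ _ (rActAux M N C c) (rActAux_rel B M N C c)

instance : SMul Cᵐᵒᵖ (BalTensor B M N) := ⟨fun c x => rAct B M N C c x⟩

lemma BalTensor.rsmul_mk (c : Cᵐᵒᵖ) (x : TensorProduct ℤ M N) :
    c • (BalTensor.mk B M N x) = BalTensor.mk B M N (rActAux M N C c x) := rfl

lemma BalTensor.rsmul_tmul (c : Cᵐᵒᵖ) (m : M) (n : N) :
    c • (BalTensor.tmul B M N m n) = BalTensor.tmul B M N m (c • n) := by
  rw [BalTensor.tmul, BalTensor.rsmul_mk, rActAux_tmul]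
  rfl

instance BalTensor.instRightModule : Module Cᵐᵒᵖ (BalTensor B M N) where
  one_smul x := by
    obtain ⟨y, rfl⟩ := BalTensor.mk_surjective B M N x
    rw [BalTensor.rsmul_mk]
    congr 1
    have h : rActAux M N C (1 : Cᵐᵒᵖ) = LinearMap.id :=
      TensorProduct.ext' fun m n => by show m ⊗ₜ[ℤ] ((1 : Cᵐᵒᵖ) • n) = m ⊗ₜ[ℤ] n; rw [one_smul]
    rw [h]; rfl
  mul_smul a b x := by
    obtain ⟨y, rfl⟩ := BalTensor.mk_surjective B M N x
    rw [BalTensor.rsmul_mk, BalTensor.rsmul_mk, BalTensor.rsmul_mk]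
    congr 1
    have h : rActAux M N C (a * b) = (rActAux M N C a).comp (rActAux M N C b) :=
      TensorProduct.ext' fun m n => by
        show m ⊗ₜ[ℤ] ((a * b) • n) = m ⊗ₜ[ℤ] (a • b • n); rw [mul_smul]
    rw [h]; rfl
  smul_zero c := map_zero (rAct B M N C c)
  smul_add c x y := map_add (rAct B M N C c) x y
  add_smul a b x := by
    obtain ⟨y, rfl⟩ := BalTensor.mk_surjective B M N x
    rw [BalTensor.rsmul_mk, BalTensor.rsmul_mk, BalTensor.rsmul_mk, ← map_add]
    congr 1
    have h : rActAux M N C (a + b) = rActAux M N C a + rActAux M N C b :=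
      TensorProduct.ext' fun m n => by
        show m ⊗ₜ[ℤ] ((a + b) • n) = m ⊗ₜ[ℤ] (a • n) + m ⊗ₜ[ℤ] (b • n)
        rw [add_smul, TensorProduct.tmul_add]
    rw [h]; rfl
  zero_smul x := by
    obtain ⟨y, rfl⟩ := BalTensor.mk_surjective B M N x
    rw [BalTensor.rsmul_mk]
    have h : rActAux M N C (0 : Cᵐᵒᵖ) = 0 :=
      TensorProduct.ext' fun m n => by
        show m ⊗ₜ[ℤ] ((0 : Cᵐᵒᵖ) • n) = 0; rw [zero_smul, TensorProduct.tmul_zero]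
    rw [h]
    simp

end RightAction

section Comm

variable (B : Type u) [Ring B] (M : Type u) [AddCommGroup M] [Module Bᵐᵒᵖ M]
  (N : Type u) [AddCommGroup N] [Module B N]
  (A : Type u) [Ring A] [Module A M] [SMulCommClass A Bᵐᵒᵖ M]
  (C : Type u) [Ring C] [Module Cᵐᵒᵖ N] [SMulCommClass B Cᵐᵒᵖ N]

instance BalTensor.instSMulCommClass : SMulCommClass A Cᵐᵒᵖ (BalTensor B M N) := by
  constructor
  intro a c x
  obtain ⟨y, rfl⟩ := BalTensor.mk_surjective B M N x
  rw [BalTensor.rsmul_mk, BalTensor.lsmul_mk, BalTensor.lsmul_mk, BalTensor.rsmul_mk]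
  congr 1
  have h : (lActAux M N A a).comp (rActAux M N C c)
      = (rActAux M N C c).comp (lActAux M N A a) :=
    TensorProduct.ext' fun m n => by
      rfl
  exact DFunLike.congr_fun h y

end Comm

section BimodHom

variable (A : Type u) [Ring A] (C : Type u) [Ring C]
variable (X : Type u) [AddCommGroup X] [Module A X] [Module Cᵐᵒᵖ X]
variable (Y : Type u) [AddCommGroup Y] [Module A Y] [Module Cᵐᵒᵖ Y]

/-- A map of `(A,C)`-bimodules: additive, left `A`-equivariant and right `C`-equivariant. -/
structure IsBimodHom (f : X → Y) : Prop where
  map_add : ∀ x y, f (x + y) = f x + f y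
  map_lsmul : ∀ (a : A) (x : X), f (a • x) = a • f x
  map_rsmul : ∀ (c : Cᵐᵒᵖ) (x : X), f (c • x) = c • f x

/-- `X` is (isomorphic to) a direct summand of `Y` as an `(A,C)`-bimodule,
i.e. a retract of `Y`. -/
def IsBimodSummand : Prop :=
  ∃ (i : X → Y) (p : Y → X), IsBimodHom A C X Y i ∧ IsBimodHom A C Y X p ∧ ∀ x, p (i x) = x

end BimodHom

section Jorder

variable (k : Type u) [Field k]

/-- A finite-dimensional `(A,B)`-bimodule over `k`, whose two induced `k`-actions agree
with the given one. -/
structure BimodData (A B : Type u) [Ring A] [Ring B] [Algebra k A] [Algebra k B] :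
    Type (u + 1) where
  X : Type u
  [acg : AddCommGroup X]
  [modk : Module k X]
  [modl : Module A X]
  [modr : Module Bᵐᵒᵖ X]
  [scc : SMulCommClass A Bᵐᵒᵖ X]
  [tl : IsScalarTower k A X]
  [tr : IsScalarTower k Bᵐᵒᵖ X]
  [fd : FiniteDimensional k X]

attribute [instance] BimodData.acg BimodData.modk BimodData.modl BimodData.modr BimodData.scc
  BimodData.tl BimodData.tr BimodData.fd

variable (A B : Type u) [Ring A] [Ring B] [Algebra k A] [Algebra k B]

/-- `A ≥_J B`: there are finite-dimensional bimodules `M`, `N` such that the regular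
`A`-`A`-bimodule `A` is a direct summand of `M ⊗_B N`. -/
def Jge : Prop :=
  ∃ (M : BimodData k A B) (N : BimodData k B A),
    IsBimodSummand A A A (BalTensor B M.X N.X)

/-- `A ≤_J B`. -/
def Jle : Prop := Jge k B A

/-- `A ∼_J B`: two-sided equivalence. -/
def Jequiv : Prop := Jge k A B ∧ Jge k B A

/-- `A >_J B`: strict two-sided inequality. -/
def Jgt : Prop := Jge k A B ∧ ¬ Jge k B A

end Jorder


section Triangular

variable (k : Type u) [Field k]

/-- The algebra `T_n(A)` of upper triangular `n × n` matrices with entries in `A`,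
as a subalgebra of the full matrix algebra. -/
def upperTriangular (A : Type u) [Ring A] [Algebra k A] (n : ℕ) :
    Subalgebra k (Matrix (Fin n) (Fin n) A) where
  carrier := { M | ∀ i j : Fin n, j < i → M i j = 0 }
  mul_mem' := fun {X Y} hX hY => by
    intro i j hij
    rw [Matrix.mul_apply]
    apply Finset.sum_eq_zero
    intro l _
    rcases lt_or_ge l i with h | h
    · rw [hX i l h, zero_mul]
    · rw [hY l j (lt_of_lt_of_le hij h), mul_zero]
  add_mem' := fun {X Y} hX hY i j hij => by
    rw [Matrix.add_apply, hX i j hij, hY i j hij, add_zero]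
  one_mem' := fun i j hij => Matrix.one_apply_ne (ne_of_gt hij)
  zero_mem' := fun i j _ => rfl
  algebraMap_mem' := fun c i j hij => by
    rw [Matrix.algebraMap_matrix_apply, if_neg (ne_of_gt hij)]

instance (A : Type u) [Ring A] [Algebra k A] [FiniteDimensional k A] (n : ℕ) :
    FiniteDimensional k (↥(upperTriangular k A n)) :=
  FiniteDimensional.finiteDimensional_submodule (Subalgebra.toSubmodule (upperTriangular k A n))

end Triangular
set_option maxHeartbeats 1000000
set_option synthInstance.maxHeartbeats 1000000

section Stmt14Aux

section BalLemmas

variable (B : Type u) [Ring B] (M : Type u) [AddCommGroup M] [Module Bᵐᵒᵖ M]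
  (N : Type u) [AddCommGroup N] [Module B N]

lemma BalTensor.tmul_add (m : M) (n₁ n₂ : N) :
    BalTensor.tmul B M N m (n₁ + n₂) = BalTensor.tmul B M N m n₁ + BalTensor.tmul B M N m n₂ := by
  rw [BalTensor.tmul, BalTensor.tmul, BalTensor.tmul, TensorProduct.tmul_add, map_add]

lemma BalTensor.add_tmul (m₁ m₂ : M) (n : N) :
    BalTensor.tmul B M N (m₁ + m₂) n = BalTensor.tmul B M N m₁ n + BalTensor.tmul B M N m₂ n := by
  rw [BalTensor.tmul, BalTensor.tmul, BalTensor.tmul, TensorProduct.add_tmul, map_add]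

lemma BalTensor.tmul_zero (m : M) : BalTensor.tmul B M N m 0 = 0 := by
  rw [BalTensor.tmul, TensorProduct.tmul_zero, map_zero]

lemma BalTensor.zero_tmul (n : N) : BalTensor.tmul B M N 0 n = 0 := by
  rw [BalTensor.tmul, TensorProduct.zero_tmul, map_zero]

lemma BalTensor.tmul_sum {ι : Type*} (s : Finset ι) (m : M) (f : ι → N) :
    BalTensor.tmul B M N m (∑ i ∈ s, f i) = ∑ i ∈ s, BalTensor.tmul B M N m (f i) := by
  rw [BalTensor.tmul, TensorProduct.tmul_sum, map_sum]; rfl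

lemma BalTensor.sum_tmul {ι : Type*} (s : Finset ι) (f : ι → M) (n : N) :
    BalTensor.tmul B M N (∑ i ∈ s, f i) n = ∑ i ∈ s, BalTensor.tmul B M N (f i) n := by
  rw [BalTensor.tmul, TensorProduct.sum_tmul, map_sum]; rfl

end BalLemmas

end Stmt14Aux
section TriModule

variable (k : Type u) [Field k] (n : ℕ)

/-- Upper triangular matrices with entries in a module `V`. -/
def triSub (V : Type u) [AddCommGroup V] [Module k V] :
    Submodule k (Matrix (Fin n) (Fin n) V) where
  carrier := { X | ∀ i j : Fin n, j < i → X i j = 0 }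
  add_mem' := fun {X Y} hX hY i j hij => by
    rw [Matrix.add_apply, hX i j hij, hY i j hij, add_zero]
  zero_mem' := fun i j _ => rfl
  smul_mem' := fun c X hX i j hij => by
    rw [Matrix.smul_apply, hX i j hij, smul_zero]

abbrev Tri (V : Type u) [AddCommGroup V] [Module k V] : Type u := ↥(triSub k n V)

variable (B A : Type u) [Ring B] [Algebra k B] [Ring A] [Algebra k A]

lemma upt_apply {R : Type u} [Ring R] [Algebra k R] (b : ↥(upperTriangular k R n))
    {i j : Fin n} (h : j < i) : b.1 i j = 0 := b.2 i j h

variable (V : Type u) [AddCommGroup V] [Module k V]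

lemma Tri.apply_eq_zero (X : Tri k n V) {i j : Fin n} (h : j < i) : X.1 i j = 0 := X.2 i j h

section Left

variable [Module B V] [IsScalarTower k B V]

instance Tri.instSMulLeft : SMul ↥(upperTriangular k B n) (Tri k n V) :=
  ⟨fun b X => ⟨fun i j => ∑ l, b.1 i l • X.1 l j, fun i j hij => by
    apply Finset.sum_eq_zero
    intro l _
    rcases lt_or_ge l i with h | h
    · rw [upt_apply k n b h, zero_smul]
    · rw [Tri.apply_eq_zero k n V X (lt_of_lt_of_le hij h), smul_zero]⟩⟩

lemma Tri.lsmul_apply (b : ↥(upperTriangular k B n)) (X : Tri k n V) (i j : Fin n) :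
    (b • X).1 i j = ∑ l, b.1 i l • X.1 l j := rfl

instance Tri.instModuleLeft : Module ↥(upperTriangular k B n) (Tri k n V) where
  one_smul X := Subtype.ext <| funext fun i => funext fun j => by
    show ∑ l, (1 : ↥(upperTriangular k B n)).1 i l • X.1 l j = X.1 i j
    simp [OneMemClass.coe_one, Matrix.one_apply, ite_smul]
  mul_smul b c X := Subtype.ext <| funext fun i => funext fun j => by
    show ∑ l, (b * c).1 i l • X.1 l j = ∑ t, b.1 i t • (∑ l, c.1 t l • X.1 l j)
    simp only [MulMemClass.coe_mul, Matrix.mul_apply, Finset.sum_smul, Finset.smul_sum, mul_smul]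
    exact Finset.sum_comm
  smul_zero b := Subtype.ext <| funext fun i => funext fun j => by
    show ∑ l, b.1 i l • (0 : Tri k n V).1 l j = (0 : Tri k n V).1 i j
    simp
  smul_add b X Y := Subtype.ext <| funext fun i => funext fun j => by
    show ∑ l, b.1 i l • (X + Y).1 l j = (∑ l, b.1 i l • X.1 l j) + ∑ l, b.1 i l • Y.1 l j
    simp [Finset.sum_add_distrib, smul_add]
  add_smul b c X := Subtype.ext <| funext fun i => funext fun j => by
    show ∑ l, (b + c).1 i l • X.1 l j = (∑ l, b.1 i l • X.1 l j) + ∑ l, c.1 i l • X.1 l j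
    simp [add_smul, Finset.sum_add_distrib]
  zero_smul X := Subtype.ext <| funext fun i => funext fun j => by
    show ∑ l, (0 : ↥(upperTriangular k B n)).1 i l • X.1 l j = (0 : Tri k n V).1 i j
    simp

instance Tri.instTowerLeft : IsScalarTower k ↥(upperTriangular k B n) (Tri k n V) :=
  ⟨fun c b X => Subtype.ext <| funext fun i => funext fun j => by
    show ∑ l, (c • b).1 i l • X.1 l j = c • ∑ l, b.1 i l • X.1 l j
    rw [Finset.smul_sum]
    refine Finset.sum_congr rfl fun l _ => ?_
    show (c • b.1) i l • X.1 l j = c • (b.1 i l • X.1 l j)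
    rw [Matrix.smul_apply, smul_assoc]⟩

end Left

section Right

variable [Module Aᵐᵒᵖ V] [IsScalarTower k Aᵐᵒᵖ V]

instance Tri.instSMulRight : SMul (↥(upperTriangular k A n))ᵐᵒᵖ (Tri k n V) :=
  ⟨fun a X => ⟨fun i j => ∑ l, op (a.unop.1 l j) • X.1 i l, fun i j hij => by
    apply Finset.sum_eq_zero
    intro l _
    rcases le_or_gt l j with h | h
    · rw [Tri.apply_eq_zero k n V X (lt_of_le_of_lt h hij), smul_zero]
    · rw [upt_apply k n a.unop h, op_zero, zero_smul]⟩⟩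

lemma Tri.rsmul_apply (a : (↥(upperTriangular k A n))ᵐᵒᵖ) (X : Tri k n V) (i j : Fin n) :
    (a • X).1 i j = ∑ l, op (a.unop.1 l j) • X.1 i l := rfl

instance Tri.instModuleRight : Module (↥(upperTriangular k A n))ᵐᵒᵖ (Tri k n V) where
  one_smul X := Subtype.ext <| funext fun i => funext fun j => by
    show ∑ l, op ((1 : (↥(upperTriangular k A n))ᵐᵒᵖ).unop.1 l j) • X.1 i l = X.1 i j
    rw [Finset.sum_eq_single j]
    · simp [Matrix.one_apply]
    · intro t _ ht
      rw [unop_one, OneMemClass.coe_one, Matrix.one_apply, if_neg ht, op_zero, zero_smul]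
    · intro hj; exact absurd (Finset.mem_univ j) hj
  mul_smul a b X := Subtype.ext <| funext fun i => funext fun j => by
    show ∑ l, op ((a * b).unop.1 l j) • X.1 i l
      = ∑ t, op (a.unop.1 t j) • (∑ l, op (b.unop.1 l t) • X.1 i l)
    simp only [unop_mul, MulMemClass.coe_mul, Matrix.mul_apply, Finset.op_sum, Finset.sum_smul,
      op_mul, mul_smul, Finset.smul_sum]
    exact Finset.sum_comm
  smul_zero a := Subtype.ext <| funext fun i => funext fun j => by
    show ∑ l, op (a.unop.1 l j) • (0 : Tri k n V).1 i l = (0 : Tri k n V).1 i j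
    simp
  smul_add a X Y := Subtype.ext <| funext fun i => funext fun j => by
    show ∑ l, op (a.unop.1 l j) • (X + Y).1 i l
      = (∑ l, op (a.unop.1 l j) • X.1 i l) + ∑ l, op (a.unop.1 l j) • Y.1 i l
    simp [Finset.sum_add_distrib, smul_add]
  add_smul a b X := Subtype.ext <| funext fun i => funext fun j => by
    show ∑ l, op ((a + b).unop.1 l j) • X.1 i l
      = (∑ l, op (a.unop.1 l j) • X.1 i l) + ∑ l, op (b.unop.1 l j) • X.1 i l
    simp [op_add, add_smul, Finset.sum_add_distrib]
  zero_smul X := Subtype.ext <| funext fun i => funext fun j => by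
    show ∑ l, op ((0 : (↥(upperTriangular k A n))ᵐᵒᵖ).unop.1 l j) • X.1 i l
      = (0 : Tri k n V).1 i j
    simp

instance Tri.instTowerRight : IsScalarTower k (↥(upperTriangular k A n))ᵐᵒᵖ (Tri k n V) :=
  ⟨fun c a X => Subtype.ext <| funext fun i => funext fun j => by
    show ∑ l, op ((c • a).unop.1 l j) • X.1 i l = c • ∑ l, op (a.unop.1 l j) • X.1 i l
    rw [Finset.smul_sum]
    refine Finset.sum_congr rfl fun l _ => ?_
    show op ((c • a.unop).1 l j) • X.1 i l = c • (op (a.unop.1 l j) • X.1 i l)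
    show op ((c • a.unop.1) l j) • X.1 i l = c • (op (a.unop.1 l j) • X.1 i l)
    rw [Matrix.smul_apply, op_smul, smul_assoc]⟩

end Right

end TriModule
section TriComm

variable (k : Type u) [Field k] (n : ℕ)
variable (B A : Type u) [Ring B] [Algebra k B] [Ring A] [Algebra k A]
variable (V : Type u) [AddCommGroup V] [Module k V]
variable [Module B V] [IsScalarTower k B V] [Module Aᵐᵒᵖ V] [IsScalarTower k Aᵐᵒᵖ V]
variable [SMulCommClass B Aᵐᵒᵖ V]

instance Tri.instSMulCommClass :
    SMulCommClass ↥(upperTriangular k B n) (↥(upperTriangular k A n))ᵐᵒᵖ (Tri k n V) := by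
  constructor
  intro b a X
  refine Subtype.ext <| funext fun i => funext fun j => ?_
  show ∑ l, b.1 i l • (∑ t, op (a.unop.1 t j) • X.1 l t)
    = ∑ t, op (a.unop.1 t j) • (∑ l, b.1 i l • X.1 l t)
  simp only [Finset.smul_sum, smul_comm]
  exact Finset.sum_comm

instance Tri.instFinite [FiniteDimensional k V] : FiniteDimensional k (Tri k n V) :=
  FiniteDimensional.finiteDimensional_submodule (triSub k n V)

end TriComm
section TriUnits

variable (k : Type u) [Field k] (n : ℕ)
variable (B A : Type u) [Ring B] [Algebra k B] [Ring A] [Algebra k A]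
variable (V : Type u) [AddCommGroup V] [Module k V]

/-- The matrix with a single entry `v` at position `(i, j)`, `i ≤ j`. -/
def triUnit (i j : Fin n) (hij : i ≤ j) (v : V) : Tri k n V :=
  ⟨fun r s => if r = i ∧ s = j then v else 0, fun r s hrs => by
    dsimp only
    rw [if_neg]
    rintro ⟨rfl, rfl⟩
    exact absurd hij (not_le.2 hrs)⟩

lemma triUnit_apply (i j : Fin n) (hij : i ≤ j) (v : V) (r s : Fin n) :
    (triUnit k n V i j hij v).1 r s = if r = i ∧ s = j then v else 0 := rfl

lemma triUnit_add (i j : Fin n) (hij : i ≤ j) (v w : V) :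
    triUnit k n V i j hij (v + w) = triUnit k n V i j hij v + triUnit k n V i j hij w := by
  refine Subtype.ext <| funext fun r => funext fun s => ?_
  show (if r = i ∧ s = j then v + w else 0)
    = (if r = i ∧ s = j then v else 0) + (if r = i ∧ s = j then w else 0)
  split_ifs <;> simp

lemma triUnit_zero (i j : Fin n) (hij : i ≤ j) :
    triUnit k n V i j hij (0 : V) = 0 := by
  refine Subtype.ext <| funext fun r => funext fun s => ?_
  show (if r = i ∧ s = j then (0 : V) else 0) = 0
  split_ifs <;> rfl

/-- The upper triangular matrix over a ring with a single entry at `(i, j)`. -/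
def algUnit (R : Type u) [Ring R] [Algebra k R] (i j : Fin n) (hij : i ≤ j) (a : R) :
    ↥(upperTriangular k R n) :=
  ⟨fun r s => if r = i ∧ s = j then a else 0, fun r s hrs => by
    dsimp only
    rw [if_neg]
    rintro ⟨rfl, rfl⟩
    exact absurd hij (not_le.2 hrs)⟩

lemma algUnit_apply (R : Type u) [Ring R] [Algebra k R] (i j : Fin n) (hij : i ≤ j) (a : R)
    (r s : Fin n) : (algUnit k n R i j hij a).1 r s = if r = i ∧ s = j then a else 0 := rfl

section Right

variable [Module Aᵐᵒᵖ V] [IsScalarTower k Aᵐᵒᵖ V]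

lemma rsmul_triUnit (b : ↥(upperTriangular k A n)) (i l : Fin n) (hil : i ≤ l) (v : V) :
    op b • triUnit k n V i l hil v
      = ∑ j, if h : l ≤ j then triUnit k n V i j (le_trans hil h) (op (b.1 l j) • v) else 0 := by
  classical
  refine Subtype.ext <| funext fun r => funext fun s => ?_
  have hR : ((∑ j, if h : l ≤ j then triUnit k n V i j (le_trans hil h) (op (b.1 l j) • v)
      else 0 : Tri k n V)).1 r s
      = if r = i ∧ l ≤ s then op (b.1 l s) • v else 0 := by
    rw [AddSubmonoidClass.coe_finset_sum, Matrix.sum_apply]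
    rw [Finset.sum_eq_single s]
    · by_cases h : l ≤ s
      · rw [dif_pos h, triUnit_apply]
        by_cases hr : r = i
        · simp [hr, h]
        · simp [hr]
      · rw [dif_neg h]
        simp [h]
    · intro j _ hj
      by_cases h : l ≤ j
      · rw [dif_pos h, triUnit_apply, if_neg]
        rintro ⟨-, rfl⟩; exact hj rfl
      · rw [dif_neg h]; rfl
    · intro hs; exact absurd (Finset.mem_univ s) hs
  rw [hR, Tri.rsmul_apply]
  rw [Finset.sum_eq_single l]
  · rw [unop_op, triUnit_apply]
    by_cases hr : r = i
    · rw [if_pos ⟨hr, rfl⟩]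
      by_cases h : l ≤ s
      · rw [if_pos ⟨hr, h⟩]
      · rw [if_neg (fun hc => h hc.2), upt_apply k n b (not_le.1 h), op_zero, zero_smul]
    · rw [if_neg (fun hc => hr hc.1), smul_zero, if_neg (fun hc => hr hc.1)]
  · intro t _ ht
    rw [unop_op, triUnit_apply, if_neg, smul_zero]
    rintro ⟨-, rfl⟩; exact ht rfl
  · intro hs; exact absurd (Finset.mem_univ l) hs

end Right

section Left

variable [Module B V] [IsScalarTower k B V]

lemma lsmul_triUnit (b : ↥(upperTriangular k B n)) (l j : Fin n) (hlj : l ≤ j) (v : V) :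
    b • triUnit k n V l j hlj v
      = ∑ i, if h : i ≤ l then triUnit k n V i j (le_trans h hlj) (b.1 i l • v) else 0 := by
  classical
  refine Subtype.ext <| funext fun r => funext fun s => ?_
  have hR : ((∑ i, if h : i ≤ l then triUnit k n V i j (le_trans h hlj) (b.1 i l • v)
      else 0 : Tri k n V)).1 r s
      = if (r ≤ l ∧ s = j) then b.1 r l • v else 0 := by
    rw [AddSubmonoidClass.coe_finset_sum, Matrix.sum_apply]
    rw [Finset.sum_eq_single r]
    · by_cases h : r ≤ l
      · rw [dif_pos h, triUnit_apply]
        by_cases hs : s = j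
        · simp [hs, h]
        · simp [hs]
      · rw [dif_neg h]
        simp [h]
    · intro i _ hi
      by_cases h : i ≤ l
      · rw [dif_pos h, triUnit_apply, if_neg]
        rintro ⟨rfl, -⟩; exact hi rfl
      · rw [dif_neg h]; rfl
    · intro hs; exact absurd (Finset.mem_univ r) hs
  rw [hR, Tri.lsmul_apply]
  rw [Finset.sum_eq_single l]
  · rw [triUnit_apply]
    by_cases hs : s = j
    · rw [if_pos ⟨rfl, hs⟩]
      by_cases h : r ≤ l
      · rw [if_pos ⟨h, hs⟩]
      · rw [if_neg (fun hc => h hc.1), upt_apply k n b (not_le.1 h), zero_smul]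
    · rw [if_neg (fun hc => hs hc.2), smul_zero, if_neg (fun hc => hs hc.2)]
  · intro t _ ht
    rw [triUnit_apply, if_neg, smul_zero]
    rintro ⟨rfl, -⟩; exact ht rfl
  · intro hs; exact absurd (Finset.mem_univ l) hs

end Left

end TriUnits
section UnitAct

variable (k : Type u) [Field k] (n : ℕ)
variable (A : Type u) [Ring A] [Algebra k A]
variable (V : Type u) [AddCommGroup V] [Module k V]

lemma algUnit_rsmul_triUnit [Module Aᵐᵒᵖ V] [IsScalarTower k Aᵐᵒᵖ V]
    (i l j : Fin n) (hil : i ≤ l) (hlj : l ≤ j) (a : A) (v : V) :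
    op (algUnit k n A l j hlj a) • triUnit k n V i l hil v
      = triUnit k n V i j (le_trans hil hlj) (op a • v) := by
  rw [rsmul_triUnit]
  rw [Finset.sum_eq_single j]
  · rw [dif_pos hlj, algUnit_apply, if_pos ⟨rfl, rfl⟩]
  · intro t _ ht
    by_cases h : l ≤ t
    · rw [dif_pos h, algUnit_apply, if_neg (fun hc => ht hc.2), op_zero, zero_smul, triUnit_zero]
    · rw [dif_neg h]
  · intro h; exact absurd (Finset.mem_univ j) h

lemma algUnit_lsmul_triUnit [Module A V] [IsScalarTower k A V]
    (i l j : Fin n) (hil : i ≤ l) (hlj : l ≤ j) (a : A) (v : V) :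
    (algUnit k n A i l hil a) • triUnit k n V l j hlj v
      = triUnit k n V i j (le_trans hil hlj) (a • v) := by
  rw [lsmul_triUnit]
  rw [Finset.sum_eq_single i]
  · rw [dif_pos hil, algUnit_apply, if_pos ⟨rfl, rfl⟩]
  · intro t _ ht
    by_cases h : t ≤ l
    · rw [dif_pos h, algUnit_apply, if_neg (fun hc => ht hc.1), zero_smul, triUnit_zero]
    · rw [dif_neg h]
  · intro h; exact absurd (Finset.mem_univ i) h

end UnitAct

section Main

variable (k : Type u) [Field k] (n : ℕ)
variable (B A : Type u) [Ring B] [Algebra k B] [Ring A] [Algebra k A]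
variable (M : BimodData k B A) (N : BimodData k A B)

/-- Shift lemma: in the balanced tensor product over `T_n(A)`, a pure tensor of units
at `(i,l)` and `(l,j)` equals the one at `(i,i)` and `(i,j)`. -/
lemma tmul_shift (i l j : Fin n) (hil : i ≤ l) (hlj : l ≤ j) (v : M.X) (w : N.X) :
    BalTensor.tmul (↥(upperTriangular k A n)) (Tri k n M.X) (Tri k n N.X)
        (triUnit k n M.X i l hil v) (triUnit k n N.X l j hlj w)
      = BalTensor.tmul (↥(upperTriangular k A n)) (Tri k n M.X) (Tri k n N.X)
          (triUnit k n M.X i i le_rfl v) (triUnit k n N.X i j (le_trans hil hlj) w) := by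
  have e1 : triUnit k n M.X i l hil v
      = op (algUnit k n A i l hil (1 : A)) • triUnit k n M.X i i le_rfl v := by
    rw [algUnit_rsmul_triUnit, op_one, one_smul]
  rw [e1, BalTensor.balance, algUnit_lsmul_triUnit, one_smul]

set_option maxHeartbeats 1000000 in
/-- The bilinear unit insertion map. -/
def iBil (i j : Fin n) (hij : i ≤ j) :
    M.X →+ N.X →+
      BalTensor (↥(upperTriangular k A n)) (Tri k n M.X) (Tri k n N.X) where
  toFun m :=
    { toFun := fun w => BalTensor.tmul (↥(upperTriangular k A n)) (Tri k n M.X) (Tri k n N.X)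
        (triUnit k n M.X i i le_rfl m) (triUnit k n N.X i j hij w)
      map_zero' := by
        show BalTensor.tmul (↥(upperTriangular k A n)) (Tri k n M.X) (Tri k n N.X)
          (triUnit k n M.X i i le_rfl m) (triUnit k n N.X i j hij 0) = 0
        rw [triUnit_zero, BalTensor.tmul_zero]
      map_add' := fun w₁ w₂ => by
        show BalTensor.tmul (↥(upperTriangular k A n)) (Tri k n M.X) (Tri k n N.X)
          (triUnit k n M.X i i le_rfl m) (triUnit k n N.X i j hij (w₁ + w₂)) = _
        rw [triUnit_add, BalTensor.tmul_add] }
  map_zero' := AddMonoidHom.ext fun w => by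
    show BalTensor.tmul (↥(upperTriangular k A n)) (Tri k n M.X) (Tri k n N.X)
        (triUnit k n M.X i i le_rfl 0) (triUnit k n N.X i j hij w) = 0
    rw [triUnit_zero, BalTensor.zero_tmul]
  map_add' := fun m₁ m₂ => AddMonoidHom.ext fun w => by
    show BalTensor.tmul (↥(upperTriangular k A n)) (Tri k n M.X) (Tri k n N.X)
        (triUnit k n M.X i i le_rfl (m₁ + m₂)) (triUnit k n N.X i j hij w) = _
    rw [triUnit_add, BalTensor.add_tmul]
    rfl

/-- Lift of `iBil` to the plain tensor product. -/
def iAux (i j : Fin n) (hij : i ≤ j) :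
    TensorProduct ℤ M.X N.X →+
      BalTensor (↥(upperTriangular k A n)) (Tri k n M.X) (Tri k n N.X) :=
  TensorProduct.liftAddHom (iBil k n B A M N i j hij) (fun r m w => by
    rw [map_zsmul, AddMonoidHom.smul_apply, ← map_zsmul])

lemma iAux_tmul (i j : Fin n) (hij : i ≤ j) (m : M.X) (w : N.X) :
    iAux k n B A M N i j hij (m ⊗ₜ w)
      = BalTensor.tmul (↥(upperTriangular k A n)) (Tri k n M.X) (Tri k n N.X)
          (triUnit k n M.X i i le_rfl m) (triUnit k n N.X i j hij w) :=
  TensorProduct.liftAddHom_tmul _ _ _ _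

lemma iAux_ker (i j : Fin n) (hij : i ≤ j) :
    balRel A M.X N.X ≤ LinearMap.ker (iAux k n B A M N i j hij).toIntLinearMap := by
  rw [balRel, Submodule.span_le]
  rintro z ⟨a, m, w, rfl⟩
  simp only [SetLike.mem_coe, LinearMap.mem_ker, map_sub, AddMonoidHom.coe_toIntLinearMap,
    iAux_tmul]
  rw [sub_eq_zero]
  have e1 : triUnit k n M.X i i le_rfl (op a • m)
      = op (algUnit k n A i i le_rfl a) • triUnit k n M.X i i le_rfl m :=
    (algUnit_rsmul_triUnit k n A M.X i i i le_rfl le_rfl a m).symm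
  rw [e1, BalTensor.balance, algUnit_lsmul_triUnit]

set_option maxHeartbeats 1000000 in
/-- The unit insertion map on the balanced tensor product, as a linear map from the quotient. -/
def iMapL (i j : Fin n) (hij : i ≤ j) :=
  Submodule.liftQ (balRel A M.X N.X) (iAux k n B A M N i j hij).toIntLinearMap
    (iAux_ker k n B A M N i j hij)

/-- The unit insertion map `M ⊗_A N → T_n(M) ⊗_{T_n(A)} T_n(N)`. -/
def iMapF (i j : Fin n) (hij : i ≤ j) :
    BalTensor A M.X N.X →
      BalTensor (↥(upperTriangular k A n)) (Tri k n M.X) (Tri k n N.X) :=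
  fun z => iMapL k n B A M N i j hij z

lemma iMapF_mk (i j : Fin n) (hij : i ≤ j) (x : TensorProduct ℤ M.X N.X) :
    iMapF k n B A M N i j hij (BalTensor.mk A M.X N.X x) = iAux k n B A M N i j hij x := rfl

lemma iMapF_tmul (i j : Fin n) (hij : i ≤ j) (m : M.X) (w : N.X) :
    iMapF k n B A M N i j hij (BalTensor.tmul A M.X N.X m w)
      = BalTensor.tmul (↥(upperTriangular k A n)) (Tri k n M.X) (Tri k n N.X)
          (triUnit k n M.X i i le_rfl m) (triUnit k n N.X i j hij w) :=
  iAux_tmul k n B A M N i j hij m w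

lemma iMapF_add (i j : Fin n) (hij : i ≤ j) (x y : BalTensor A M.X N.X) :
    iMapF k n B A M N i j hij (x + y)
      = iMapF k n B A M N i j hij x + iMapF k n B A M N i j hij y :=
  map_add (iMapL k n B A M N i j hij) x y

lemma iMapF_zero (i j : Fin n) (hij : i ≤ j) :
    iMapF k n B A M N i j hij 0 = 0 :=
  map_zero (iMapL k n B A M N i j hij)

lemma iMapF_sum (i j : Fin n) (hij : i ≤ j) {ι : Type*} (s : Finset ι)
    (f : ι → BalTensor A M.X N.X) :
    iMapF k n B A M N i j hij (∑ t ∈ s, f t) = ∑ t ∈ s, iMapF k n B A M N i j hij (f t) :=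
  map_sum (iMapL k n B A M N i j hij) f s

end Main
section BimodHomLemmas

variable (A : Type u) [Ring A] (C : Type u) [Ring C]
variable (X : Type u) [AddCommGroup X] [Module A X] [Module Cᵐᵒᵖ X]
variable (Y : Type u) [AddCommGroup Y] [Module A Y] [Module Cᵐᵒᵖ Y]
variable {f : X → Y}

lemma bimod_map_zero (hf : IsBimodHom A C X Y f) : f 0 = 0 := by
  have h := hf.map_add 0 0
  rw [add_zero] at h
  have h2 : f 0 + f 0 = f 0 + 0 := by rw [add_zero, ← h]
  exact add_left_cancel h2

lemma bimod_map_sum (hf : IsBimodHom A C X Y f) {ι : Type*} (s : Finset ι) (g : ι → X) :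
    f (∑ t ∈ s, g t) = ∑ t ∈ s, f (g t) :=
  map_sum (AddMonoidHom.mk' f hf.map_add) g s

end BimodHomLemmas

section MainP

variable (k : Type u) [Field k] (n : ℕ)
variable (B A : Type u) [Ring B] [Algebra k B] [Ring A] [Algebra k A]
variable (M : BimodData k B A) (N : BimodData k A B)
variable (p0 : BalTensor A M.X N.X → B) (hp : IsBimodHom B B (BalTensor A M.X N.X) B p0)

set_option maxHeartbeats 1000000 in
lemma Tri.zero_apply (V : Type u) [AddCommGroup V] [Module k V] (i j : Fin n) :
    (0 : Tri k n V).1 i j = 0 := rfl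

lemma Tri.add_apply (V : Type u) [AddCommGroup V] [Module k V] (XX YY : Tri k n V) (i j : Fin n) :
    (XX + YY).1 i j = XX.1 i j + YY.1 i j := rfl

set_option maxHeartbeats 1000000 in
def PBil : Tri k n M.X →+ Tri k n N.X →+ ↥(upperTriangular k B n) where
  toFun X :=
  { toFun := fun Y => ⟨fun i j => p0 (∑ l, BalTensor.tmul A M.X N.X (X.1 i l) (Y.1 l j)),
      fun i j hij => by
        show p0 (∑ l, BalTensor.tmul A M.X N.X (X.1 i l) (Y.1 l j)) = 0
        have h0 : (∑ l, BalTensor.tmul A M.X N.X (X.1 i l) (Y.1 l j)) = 0 := by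
          apply Finset.sum_eq_zero; intro l _
          rcases lt_or_ge l i with h | h
          · rw [Tri.apply_eq_zero k n M.X X h, BalTensor.zero_tmul]
          · rw [Tri.apply_eq_zero k n N.X Y (lt_of_lt_of_le hij h), BalTensor.tmul_zero]
        rw [h0, bimod_map_zero _ _ _ _ hp]⟩
    map_zero' := Subtype.ext <| funext fun i => funext fun j => by
      show p0 (∑ l, BalTensor.tmul A M.X N.X (X.1 i l) ((0 : Tri k n N.X).1 l j)) = (0 : Matrix (Fin n) (Fin n) B) i j
      have h0 : (∑ l, BalTensor.tmul A M.X N.X (X.1 i l) ((0 : Tri k n N.X).1 l j)) = 0 := by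
        apply Finset.sum_eq_zero; intro l _
        rw [Tri.zero_apply, BalTensor.tmul_zero]
      rw [h0, bimod_map_zero _ _ _ _ hp, Matrix.zero_apply]
    map_add' := fun Y₁ Y₂ => Subtype.ext <| funext fun i => funext fun j => by
      show p0 (∑ l, BalTensor.tmul A M.X N.X (X.1 i l) ((Y₁ + Y₂).1 l j))
        = p0 (∑ l, BalTensor.tmul A M.X N.X (X.1 i l) (Y₁.1 l j))
          + p0 (∑ l, BalTensor.tmul A M.X N.X (X.1 i l) (Y₂.1 l j))
      have h0 : (∑ l, BalTensor.tmul A M.X N.X (X.1 i l) ((Y₁ + Y₂).1 l j))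
          = (∑ l, BalTensor.tmul A M.X N.X (X.1 i l) (Y₁.1 l j))
            + ∑ l, BalTensor.tmul A M.X N.X (X.1 i l) (Y₂.1 l j) := by
        rw [← Finset.sum_add_distrib]
        exact Finset.sum_congr rfl fun l _ => by rw [Tri.add_apply, BalTensor.tmul_add]
      rw [h0, hp.map_add] }
  map_zero' := AddMonoidHom.ext fun Y => Subtype.ext <| funext fun i => funext fun j => by
    show p0 (∑ l, BalTensor.tmul A M.X N.X ((0 : Tri k n M.X).1 i l) (Y.1 l j))
      = (0 : Matrix (Fin n) (Fin n) B) i j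
    have h0 : (∑ l, BalTensor.tmul A M.X N.X ((0 : Tri k n M.X).1 i l) (Y.1 l j)) = 0 := by
      apply Finset.sum_eq_zero; intro l _
      rw [Tri.zero_apply, BalTensor.zero_tmul]
    rw [h0, bimod_map_zero _ _ _ _ hp, Matrix.zero_apply]
  map_add' := fun X₁ X₂ => AddMonoidHom.ext fun Y => Subtype.ext <| funext fun i =>
    funext fun j => by
    show p0 (∑ l, BalTensor.tmul A M.X N.X ((X₁ + X₂).1 i l) (Y.1 l j))
      = p0 (∑ l, BalTensor.tmul A M.X N.X (X₁.1 i l) (Y.1 l j))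
        + p0 (∑ l, BalTensor.tmul A M.X N.X (X₂.1 i l) (Y.1 l j))
    have h0 : (∑ l, BalTensor.tmul A M.X N.X ((X₁ + X₂).1 i l) (Y.1 l j))
        = (∑ l, BalTensor.tmul A M.X N.X (X₁.1 i l) (Y.1 l j))
          + ∑ l, BalTensor.tmul A M.X N.X (X₂.1 i l) (Y.1 l j) := by
      rw [← Finset.sum_add_distrib]
      exact Finset.sum_congr rfl fun l _ => by rw [Tri.add_apply, BalTensor.add_tmul]
    rw [h0, hp.map_add]


lemma PBil_apply (X : Tri k n M.X) (Y : Tri k n N.X) (i j : Fin n) :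
    (PBil k n B A M N p0 hp X Y).1 i j
      = p0 (∑ l, BalTensor.tmul A M.X N.X (X.1 i l) (Y.1 l j)) := rfl

set_option maxHeartbeats 1000000 in
/-- Lift of `PBil` to the plain tensor product. -/
def PAux : TensorProduct ℤ (Tri k n M.X) (Tri k n N.X) →+ ↥(upperTriangular k B n) :=
  TensorProduct.liftAddHom (PBil k n B A M N p0 hp) (fun r X Y => by
    have h1 := map_zsmul ((PBil k n B A M N p0 hp).flip Y) r X
    have h2 := map_zsmul ((PBil k n B A M N p0 hp) X) r Y
    rw [AddMonoidHom.flip_apply] at h1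
    exact h1.trans h2.symm)

lemma PAux_tmul (X : Tri k n M.X) (Y : Tri k n N.X) :
    PAux k n B A M N p0 hp (X ⊗ₜ Y) = PBil k n B A M N p0 hp X Y :=
  TensorProduct.liftAddHom_tmul _ _ _ _

set_option maxHeartbeats 1000000 in
lemma PAux_ker :
    balRel (↥(upperTriangular k A n)) (Tri k n M.X) (Tri k n N.X)
      ≤ LinearMap.ker (PAux k n B A M N p0 hp).toIntLinearMap := by
  rw [balRel, Submodule.span_le]
  rintro z ⟨a, X, Y, rfl⟩
  simp only [SetLike.mem_coe, LinearMap.mem_ker, map_sub, AddMonoidHom.coe_toIntLinearMap,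
    PAux_tmul]
  rw [sub_eq_zero]
  refine Subtype.ext <| funext fun i => funext fun j => ?_
  rw [PBil_apply, PBil_apply]
  congr 1
  calc ∑ l, BalTensor.tmul A M.X N.X ((op a • X).1 i l) (Y.1 l j)
      = ∑ l, ∑ t, BalTensor.tmul A M.X N.X (X.1 i t) (a.1 t l • Y.1 l j) := by
        refine Finset.sum_congr rfl fun l _ => ?_
        rw [Tri.rsmul_apply, BalTensor.sum_tmul]
        refine Finset.sum_congr rfl fun t _ => ?_
        rw [unop_op]
        exact BalTensor.balance A M.X N.X (a.1 t l) (X.1 i t) (Y.1 l j)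
    _ = ∑ t, BalTensor.tmul A M.X N.X (X.1 i t) ((a • Y).1 t j) := by
        rw [Finset.sum_comm]
        refine Finset.sum_congr rfl fun t _ => ?_
        rw [Tri.lsmul_apply, BalTensor.tmul_sum]

set_option maxHeartbeats 1000000 in
/-- The projection, as a linear map from the quotient. -/
def PMapL :=
  Submodule.liftQ (balRel (↥(upperTriangular k A n)) (Tri k n M.X) (Tri k n N.X))
    (PAux k n B A M N p0 hp).toIntLinearMap (PAux_ker k n B A M N p0 hp)

/-- The projection `T_n(M) ⊗_{T_n(A)} T_n(N) → T_n(B)`. -/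
def PF : BalTensor (↥(upperTriangular k A n)) (Tri k n M.X) (Tri k n N.X)
    → ↥(upperTriangular k B n) :=
  fun z => PMapL k n B A M N p0 hp z

lemma PF_mk (x : TensorProduct ℤ (Tri k n M.X) (Tri k n N.X)) :
    PF k n B A M N p0 hp (BalTensor.mk (↥(upperTriangular k A n)) (Tri k n M.X) (Tri k n N.X) x)
      = PAux k n B A M N p0 hp x := rfl

lemma PF_tmul (X : Tri k n M.X) (Y : Tri k n N.X) :
    PF k n B A M N p0 hp
        (BalTensor.tmul (↥(upperTriangular k A n)) (Tri k n M.X) (Tri k n N.X) X Y)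
      = PBil k n B A M N p0 hp X Y :=
  PAux_tmul k n B A M N p0 hp X Y

lemma PF_add (x y) :
    PF k n B A M N p0 hp (x + y) = PF k n B A M N p0 hp x + PF k n B A M N p0 hp y :=
  map_add (PMapL k n B A M N p0 hp) x y

end MainP
section MainP2

variable (k : Type u) [Field k] (n : ℕ)
variable (B A : Type u) [Ring B] [Algebra k B] [Ring A] [Algebra k A]
variable (M : BimodData k B A) (N : BimodData k A B)
variable (p0 : BalTensor A M.X N.X → B) (hp : IsBimodHom B B (BalTensor A M.X N.X) B p0)

lemma PF_zero : PF k n B A M N p0 hp 0 = 0 :=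
  map_zero (PMapL k n B A M N p0 hp)

lemma PF_lsmul (b : ↥(upperTriangular k B n))
    (z : BalTensor (↥(upperTriangular k A n)) (Tri k n M.X) (Tri k n N.X)) :
    PF k n B A M N p0 hp (b • z) = b * PF k n B A M N p0 hp z := by
  obtain ⟨y, rfl⟩ := BalTensor.mk_surjective (↥(upperTriangular k A n))
    (Tri k n M.X) (Tri k n N.X) z
  induction y using TensorProduct.induction_on with
  | zero =>
    rw [BalTensor.lsmul_mk,
      map_zero (lActAux (Tri k n M.X) (Tri k n N.X) (↥(upperTriangular k B n)) b),
      map_zero (BalTensor.mk (↥(upperTriangular k A n)) (Tri k n M.X) (Tri k n N.X)),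
      PF_zero, mul_zero]
  | tmul X Y =>
    rw [BalTensor.lsmul_mk, lActAux_tmul, PF_mk, PAux_tmul, PF_mk, PAux_tmul]
    refine Subtype.ext <| funext fun i => funext fun j => ?_
    show (PBil k n B A M N p0 hp (b • X) Y).1 i j
      = (b.1 * (PBil k n B A M N p0 hp X Y).1) i j
    rw [PBil_apply, Matrix.mul_apply]
    calc p0 (∑ l, BalTensor.tmul A M.X N.X ((b • X).1 i l) (Y.1 l j))
        = ∑ l, ∑ t, b.1 i t * p0 (BalTensor.tmul A M.X N.X (X.1 t l) (Y.1 l j)) := by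
          rw [bimod_map_sum _ _ _ _ hp]
          refine Finset.sum_congr rfl fun l _ => ?_
          rw [Tri.lsmul_apply, BalTensor.sum_tmul, bimod_map_sum _ _ _ _ hp]
          refine Finset.sum_congr rfl fun t _ => ?_
          rw [← BalTensor.lsmul_tmul, hp.map_lsmul, smul_eq_mul]
      _ = ∑ t, b.1 i t * p0 (∑ l, BalTensor.tmul A M.X N.X (X.1 t l) (Y.1 l j)) := by
          rw [Finset.sum_comm]
          refine Finset.sum_congr rfl fun t _ => ?_
          rw [bimod_map_sum _ _ _ _ hp, Finset.mul_sum]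
      _ = ∑ t, b.1 i t * (PBil k n B A M N p0 hp X Y).1 t j := by
          refine Finset.sum_congr rfl fun t _ => ?_
          rw [PBil_apply]
  | add x y ihx ihy =>
    calc PF k n B A M N p0 hp (b • (BalTensor.mk (↥(upperTriangular k A n)) (Tri k n M.X)
          (Tri k n N.X)) (x + y))
        = PF k n B A M N p0 hp (b • (BalTensor.mk _ _ _) x)
          + PF k n B A M N p0 hp (b • (BalTensor.mk _ _ _) y) := by
          rw [BalTensor.lsmul_mk,
            map_add (lActAux (Tri k n M.X) (Tri k n N.X) (↥(upperTriangular k B n)) b),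
            map_add (BalTensor.mk (↥(upperTriangular k A n)) (Tri k n M.X) (Tri k n N.X)),
            PF_add, BalTensor.lsmul_mk, BalTensor.lsmul_mk]
      _ = b * PF k n B A M N p0 hp ((BalTensor.mk (↥(upperTriangular k A n)) (Tri k n M.X)
          (Tri k n N.X)) (x + y)) := by
          rw [ihx, ihy,
            map_add (BalTensor.mk (↥(upperTriangular k A n)) (Tri k n M.X) (Tri k n N.X)),
            PF_add, mul_add]

lemma PF_rsmul (c : (↥(upperTriangular k B n))ᵐᵒᵖ)
    (z : BalTensor (↥(upperTriangular k A n)) (Tri k n M.X) (Tri k n N.X)) :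
    PF k n B A M N p0 hp (c • z) = PF k n B A M N p0 hp z * c.unop := by
  obtain ⟨y, rfl⟩ := BalTensor.mk_surjective (↥(upperTriangular k A n))
    (Tri k n M.X) (Tri k n N.X) z
  induction y using TensorProduct.induction_on with
  | zero =>
    rw [BalTensor.rsmul_mk,
      map_zero (rActAux (Tri k n M.X) (Tri k n N.X) (↥(upperTriangular k B n)) c),
      map_zero (BalTensor.mk (↥(upperTriangular k A n)) (Tri k n M.X) (Tri k n N.X)),
      PF_zero, zero_mul]
  | tmul X Y =>
    rw [BalTensor.rsmul_mk, rActAux_tmul, PF_mk, PAux_tmul, PF_mk, PAux_tmul]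
    refine Subtype.ext <| funext fun i => funext fun j => ?_
    show (PBil k n B A M N p0 hp X (c • Y)).1 i j
      = ((PBil k n B A M N p0 hp X Y).1 * (c.unop).1) i j
    rw [PBil_apply, Matrix.mul_apply]
    calc p0 (∑ l, BalTensor.tmul A M.X N.X (X.1 i l) ((c • Y).1 l j))
        = ∑ l, ∑ t, p0 (BalTensor.tmul A M.X N.X (X.1 i l) (Y.1 l t)) * (c.unop).1 t j := by
          rw [bimod_map_sum _ _ _ _ hp]
          refine Finset.sum_congr rfl fun l _ => ?_
          rw [Tri.rsmul_apply, BalTensor.tmul_sum, bimod_map_sum _ _ _ _ hp]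
          refine Finset.sum_congr rfl fun t _ => ?_
          rw [← BalTensor.rsmul_tmul, hp.map_rsmul, MulOpposite.smul_eq_mul_unop, unop_op]
      _ = ∑ t, (∑ l, p0 (BalTensor.tmul A M.X N.X (X.1 i l) (Y.1 l t))) * (c.unop).1 t j := by
          rw [Finset.sum_comm]
          refine Finset.sum_congr rfl fun t _ => ?_
          rw [Finset.sum_mul]
      _ = ∑ t, (PBil k n B A M N p0 hp X Y).1 i t * (c.unop).1 t j := by
          refine Finset.sum_congr rfl fun t _ => ?_
          rw [PBil_apply, bimod_map_sum _ _ _ _ hp]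
  | add x y ihx ihy =>
    calc PF k n B A M N p0 hp (c • (BalTensor.mk (↥(upperTriangular k A n)) (Tri k n M.X)
          (Tri k n N.X)) (x + y))
        = PF k n B A M N p0 hp (c • (BalTensor.mk _ _ _) x)
          + PF k n B A M N p0 hp (c • (BalTensor.mk _ _ _) y) := by
          rw [BalTensor.rsmul_mk,
            map_add (rActAux (Tri k n M.X) (Tri k n N.X) (↥(upperTriangular k B n)) c),
            map_add (BalTensor.mk (↥(upperTriangular k A n)) (Tri k n M.X) (Tri k n N.X)),
            PF_add, BalTensor.rsmul_mk, BalTensor.rsmul_mk]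
      _ = PF k n B A M N p0 hp ((BalTensor.mk (↥(upperTriangular k A n)) (Tri k n M.X)
          (Tri k n N.X)) (x + y)) * unop c := by
          rw [ihx, ihy,
            map_add (BalTensor.mk (↥(upperTriangular k A n)) (Tri k n M.X) (Tri k n N.X)),
            PF_add, add_mul]

lemma PF_isBimodHom :
    IsBimodHom (↥(upperTriangular k B n)) (↥(upperTriangular k B n))
      (BalTensor (↥(upperTriangular k A n)) (Tri k n M.X) (Tri k n N.X))
      (↥(upperTriangular k B n)) (PF k n B A M N p0 hp) := by
  refine ⟨PF_add k n B A M N p0 hp, ?_, ?_⟩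
  · intro b z
    rw [PF_lsmul, smul_eq_mul]
  · intro c z
    rw [PF_rsmul, MulOpposite.smul_eq_mul_unop]

end MainP2
section MainI

variable (k : Type u) [Field k] (n : ℕ)
variable (B A : Type u) [Ring B] [Algebra k B] [Ring A] [Algebra k A]
variable (M : BimodData k B A) (N : BimodData k A B)

lemma tbal_smul_zero (b : ↥(upperTriangular k B n)) :
    b • (0 : BalTensor (↥(upperTriangular k A n)) (Tri k n M.X) (Tri k n N.X)) = 0 := by
  have h : (0 : BalTensor (↥(upperTriangular k A n)) (Tri k n M.X) (Tri k n N.X))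
      = BalTensor.mk (↥(upperTriangular k A n)) (Tri k n M.X) (Tri k n N.X) 0 :=
    (map_zero _).symm
  rw [h, BalTensor.lsmul_mk,
    map_zero (lActAux (Tri k n M.X) (Tri k n N.X) (↥(upperTriangular k B n)) b)]

lemma tbal_smul_add (b : ↥(upperTriangular k B n))
    (x y : BalTensor (↥(upperTriangular k A n)) (Tri k n M.X) (Tri k n N.X)) :
    b • (x + y) = b • x + b • y :=
  smul_add b x y

lemma tbal_rsmul_zero (c : (↥(upperTriangular k B n))ᵐᵒᵖ) :
    c • (0 : BalTensor (↥(upperTriangular k A n)) (Tri k n M.X) (Tri k n N.X)) = 0 := by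
  have h : (0 : BalTensor (↥(upperTriangular k A n)) (Tri k n M.X) (Tri k n N.X))
      = BalTensor.mk (↥(upperTriangular k A n)) (Tri k n M.X) (Tri k n N.X) 0 :=
    (map_zero _).symm
  rw [h, BalTensor.rsmul_mk,
    map_zero (rActAux (Tri k n M.X) (Tri k n N.X) (↥(upperTriangular k B n)) c)]

lemma tbal_rsmul_add (c : (↥(upperTriangular k B n))ᵐᵒᵖ)
    (x y : BalTensor (↥(upperTriangular k A n)) (Tri k n M.X) (Tri k n N.X)) :
    c • (x + y) = c • x + c • y :=
  smul_add c x y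

lemma bal_smul_add (b : B) (x y : BalTensor A M.X N.X) : b • (x + y) = b • x + b • y :=
  smul_add b x y

lemma bal_zero_smul (z : BalTensor A M.X N.X) : (0 : B) • z = 0 :=
  zero_smul B z

lemma bal_smul_zero (b : B) : b • (0 : BalTensor A M.X N.X) = 0 :=
  smul_zero b

lemma bal_rsmul_zero (c : Bᵐᵒᵖ) : c • (0 : BalTensor A M.X N.X) = 0 :=
  smul_zero c

lemma lsmul_iMapF (l j : Fin n) (hlj : l ≤ j) (b : ↥(upperTriangular k B n))
    (z : BalTensor A M.X N.X) :
    b • iMapF k n B A M N l j hlj z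
      = ∑ i, if h : i ≤ l then iMapF k n B A M N i j (le_trans h hlj) (b.1 i l • z) else 0 := by
  obtain ⟨y, rfl⟩ := BalTensor.mk_surjective A M.X N.X z
  induction y using TensorProduct.induction_on with
  | zero =>
    rw [iMapF_mk, map_zero (iAux k n B A M N l j hlj), tbal_smul_zero]
    symm
    apply Finset.sum_eq_zero
    intro i _
    by_cases h : i ≤ l
    · rw [dif_pos h, map_zero (BalTensor.mk A M.X N.X), bal_smul_zero,
        iMapF_zero]
    · rw [dif_neg h]
  | tmul m w =>
    rw [iMapF_mk, iAux_tmul, BalTensor.lsmul_tmul, lsmul_triUnit, BalTensor.sum_tmul]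
    refine Finset.sum_congr rfl fun i _ => ?_
    by_cases h : i ≤ l
    · rw [dif_pos h, dif_pos h, tmul_shift, BalTensor.lsmul_mk, lActAux_tmul, iMapF_mk,
        iAux_tmul]
    · rw [dif_neg h, dif_neg h, BalTensor.zero_tmul]
  | add x y ihx ihy =>
    rw [map_add (BalTensor.mk A M.X N.X), iMapF_add, tbal_smul_add, ihx, ihy,
      ← Finset.sum_add_distrib]
    refine Finset.sum_congr rfl fun i _ => ?_
    by_cases h : i ≤ l
    · rw [dif_pos h, dif_pos h, dif_pos h, bal_smul_add, iMapF_add]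
    · rw [dif_neg h, dif_neg h, dif_neg h, add_zero]

lemma rsmul_iMapF (i l : Fin n) (hil : i ≤ l) (b : ↥(upperTriangular k B n))
    (z : BalTensor A M.X N.X) :
    (op b) • iMapF k n B A M N i l hil z
      = ∑ j, if h : l ≤ j then iMapF k n B A M N i j (le_trans hil h)
          ((op (b.1 l j) : Bᵐᵒᵖ) • z) else 0 := by
  obtain ⟨y, rfl⟩ := BalTensor.mk_surjective A M.X N.X z
  induction y using TensorProduct.induction_on with
  | zero =>
    rw [iMapF_mk, map_zero (iAux k n B A M N i l hil), tbal_rsmul_zero]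
    symm
    apply Finset.sum_eq_zero
    intro j _
    by_cases h : l ≤ j
    · rw [dif_pos h, map_zero (BalTensor.mk A M.X N.X), bal_rsmul_zero, iMapF_zero]
    · rw [dif_neg h]
  | tmul m w =>
    rw [iMapF_mk, iAux_tmul, BalTensor.rsmul_tmul, rsmul_triUnit, BalTensor.tmul_sum]
    refine Finset.sum_congr rfl fun j _ => ?_
    by_cases h : l ≤ j
    · rw [dif_pos h, dif_pos h, BalTensor.rsmul_mk, rActAux_tmul, iMapF_mk, iAux_tmul]
    · rw [dif_neg h, dif_neg h, BalTensor.tmul_zero]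
  | add x y ihx ihy =>
    rw [map_add (BalTensor.mk A M.X N.X), iMapF_add, tbal_rsmul_add, ihx, ihy,
      ← Finset.sum_add_distrib]
    refine Finset.sum_congr rfl fun j _ => ?_
    by_cases h : l ≤ j
    · rw [dif_pos h, dif_pos h, dif_pos h]
      rw [show ((op (b.1 l j) : Bᵐᵒᵖ) • ((BalTensor.mk A M.X N.X) x
          + (BalTensor.mk A M.X N.X) y))
        = (op (b.1 l j) : Bᵐᵒᵖ) • (BalTensor.mk A M.X N.X) x
          + (op (b.1 l j) : Bᵐᵒᵖ) • (BalTensor.mk A M.X N.X) y from smul_add _ _ _]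
      rw [iMapF_add]
    · rw [dif_neg h, dif_neg h, dif_neg h, add_zero]

end MainI
section MainI2

variable (k : Type u) [Field k] (n : ℕ)
variable (B A : Type u) [Ring B] [Algebra k B] [Ring A] [Algebra k A]
variable (M : BimodData k B A) (N : BimodData k A B)

lemma algUnit_zero (R : Type u) [Ring R] [Algebra k R] (i j : Fin n) (hij : i ≤ j) :
    algUnit k n R i j hij (0 : R) = 0 := by
  refine Subtype.ext <| funext fun r => funext fun s => ?_
  show (if r = i ∧ s = j then (0 : R) else 0) = (0 : Matrix (Fin n) (Fin n) R) r s
  rw [Matrix.zero_apply]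
  split_ifs <;> rfl

lemma algUnit_add (R : Type u) [Ring R] [Algebra k R] (i j : Fin n) (hij : i ≤ j) (a b : R) :
    algUnit k n R i j hij (a + b) = algUnit k n R i j hij a + algUnit k n R i j hij b := by
  refine Subtype.ext <| funext fun r => funext fun s => ?_
  show (if r = i ∧ s = j then a + b else 0)
    = (if r = i ∧ s = j then a else 0) + (if r = i ∧ s = j then b else 0)
  split_ifs <;> simp

variable (p0 : BalTensor A M.X N.X → B) (hp : IsBimodHom B B (BalTensor A M.X N.X) B p0)

lemma PF_sum {ι : Type*} (s : Finset ι)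
    (f : ι → BalTensor (↥(upperTriangular k A n)) (Tri k n M.X) (Tri k n N.X)) :
    PF k n B A M N p0 hp (∑ t ∈ s, f t) = ∑ t ∈ s, PF k n B A M N p0 hp (f t) :=
  map_sum (PMapL k n B A M N p0 hp) f s

lemma PF_iMapF (i j : Fin n) (hij : i ≤ j) (z : BalTensor A M.X N.X) :
    PF k n B A M N p0 hp (iMapF k n B A M N i j hij z)
      = algUnit k n B i j hij (p0 z) := by
  obtain ⟨y, rfl⟩ := BalTensor.mk_surjective A M.X N.X z
  induction y using TensorProduct.induction_on with
  | zero =>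
    rw [iMapF_mk, map_zero (iAux k n B A M N i j hij), PF_zero,
      map_zero (BalTensor.mk A M.X N.X), bimod_map_zero _ _ _ _ hp, algUnit_zero]
  | tmul m w =>
    rw [iMapF_mk, iAux_tmul, PF_tmul]
    refine Subtype.ext <| funext fun r => funext fun s => ?_
    rw [PBil_apply, algUnit_apply]
    rw [Finset.sum_eq_single i]
    · rw [triUnit_apply, triUnit_apply]
      by_cases hr : r = i
      · by_cases hs : s = j
        · rw [if_pos ⟨hr, rfl⟩, if_pos ⟨rfl, hs⟩, if_pos ⟨hr, hs⟩]
          rfl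
        · rw [if_neg (show ¬(i = i ∧ s = j) from fun hc => hs hc.2), BalTensor.tmul_zero,
            bimod_map_zero _ _ _ _ hp,
            if_neg (show ¬(r = i ∧ s = j) from fun hc => hs hc.2)]
      · rw [if_neg (fun hc => hr hc.1), BalTensor.zero_tmul, bimod_map_zero _ _ _ _ hp,
          if_neg (fun hc => hr hc.1)]
    · intro l _ hl
      rw [triUnit_apply, if_neg (fun hc => hl hc.2), BalTensor.zero_tmul]
    · intro h; exact absurd (Finset.mem_univ i) h
  | add x y ihx ihy =>
    rw [map_add (BalTensor.mk A M.X N.X), iMapF_add, PF_add, ihx, ihy, hp.map_add, algUnit_add]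

end MainI2
section MainIF

variable (k : Type u) [Field k] (n : ℕ)
variable (B A : Type u) [Ring B] [Algebra k B] [Ring A] [Algebra k A]
variable (M : BimodData k B A) (N : BimodData k A B)

lemma tbal_smul_sum {ι : Type*} (s : Finset ι) (b : ↥(upperTriangular k B n))
    (f : ι → BalTensor (↥(upperTriangular k A n)) (Tri k n M.X) (Tri k n N.X)) :
    b • (∑ t ∈ s, f t) = ∑ t ∈ s, b • f t := by
  classical
  induction s using Finset.induction_on with
  | empty => rw [Finset.sum_empty, Finset.sum_empty, tbal_smul_zero]
  | insert _ _ hnot ih =>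
    rw [Finset.sum_insert hnot, Finset.sum_insert hnot, tbal_smul_add, ih]

lemma tbal_rsmul_sum {ι : Type*} (s : Finset ι) (c : (↥(upperTriangular k B n))ᵐᵒᵖ)
    (f : ι → BalTensor (↥(upperTriangular k A n)) (Tri k n M.X) (Tri k n N.X)) :
    c • (∑ t ∈ s, f t) = ∑ t ∈ s, c • f t := by
  classical
  induction s using Finset.induction_on with
  | empty => rw [Finset.sum_empty, Finset.sum_empty, tbal_rsmul_zero]
  | insert _ _ hnot ih =>
    rw [Finset.sum_insert hnot, Finset.sum_insert hnot, tbal_rsmul_add, ih]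

lemma bal_zero_rsmul (z : BalTensor A M.X N.X) : ((0 : Bᵐᵒᵖ)) • z = 0 :=
  zero_smul Bᵐᵒᵖ z

variable (i0 : B → BalTensor A M.X N.X) (hi : IsBimodHom B B B (BalTensor A M.X N.X) i0)

include hi

/-- The inclusion `T_n(B) → T_n(M) ⊗_{T_n(A)} T_n(N)`. -/
def iF : ↥(upperTriangular k B n)
    → BalTensor (↥(upperTriangular k A n)) (Tri k n M.X) (Tri k n N.X) :=
  fun Y => ∑ i, ∑ j, if h : i ≤ j then iMapF k n B A M N i j h (i0 (Y.1 i j)) else 0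

lemma iF_add (Y Z : ↥(upperTriangular k B n)) :
    iF k n B A M N i0 (Y + Z) = iF k n B A M N i0 Y + iF k n B A M N i0 Z := by
  simp only [iF]
  rw [← Finset.sum_add_distrib]
  refine Finset.sum_congr rfl fun i _ => ?_
  rw [← Finset.sum_add_distrib]
  refine Finset.sum_congr rfl fun j _ => ?_
  by_cases h : i ≤ j
  · rw [dif_pos h, dif_pos h, dif_pos h,
      show (Y + Z).1 i j = Y.1 i j + Z.1 i j from rfl, hi.map_add, iMapF_add]
  · rw [dif_neg h, dif_neg h, dif_neg h, add_zero]

lemma iF_lsmul (b : ↥(upperTriangular k B n)) (Y : ↥(upperTriangular k B n)) :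
    iF k n B A M N i0 (b * Y) = b • iF k n B A M N i0 Y := by
  have hL : iF k n B A M N i0 (b * Y)
      = ∑ i, ∑ j, ∑ l, (if h : i ≤ j then
          iMapF k n B A M N i j h (b.1 i l • i0 (Y.1 l j)) else 0) := by
    simp only [iF]
    refine Finset.sum_congr rfl fun i _ => Finset.sum_congr rfl fun j _ => ?_
    by_cases h : i ≤ j
    · rw [dif_pos h]
      have he : (b * Y).1 i j = ∑ l, b.1 i l * Y.1 l j := by
        rw [MulMemClass.coe_mul, Matrix.mul_apply]
      rw [he, bimod_map_sum _ _ _ _ hi, iMapF_sum]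
      refine Finset.sum_congr rfl fun l _ => ?_
      rw [dif_pos h, ← smul_eq_mul, hi.map_lsmul]
    · rw [dif_neg h]
      symm
      exact Finset.sum_eq_zero fun l _ => dif_neg h
  have hR : b • iF k n B A M N i0 Y
      = ∑ l, ∑ j, ∑ i, (if h : i ≤ j then
          iMapF k n B A M N i j h (b.1 i l • i0 (Y.1 l j)) else 0) := by
    simp only [iF]
    rw [tbal_smul_sum]
    refine Finset.sum_congr rfl fun l _ => ?_
    rw [tbal_smul_sum]
    refine Finset.sum_congr rfl fun j _ => ?_
    by_cases hlj : l ≤ j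
    · rw [dif_pos hlj, lsmul_iMapF]
      refine Finset.sum_congr rfl fun i _ => ?_
      by_cases h : i ≤ l
      · rw [dif_pos h, dif_pos (le_trans h hlj)]
      · rw [dif_neg h]
        by_cases hij : i ≤ j
        · rw [dif_pos hij, upt_apply k n b (not_le.1 h), bal_zero_smul, iMapF_zero]
        · rw [dif_neg hij]
    · rw [dif_neg hlj, tbal_smul_zero]
      symm
      refine Finset.sum_eq_zero fun i _ => ?_
      by_cases hij : i ≤ j
      · rw [dif_pos hij, upt_apply k n Y (not_le.1 hlj), bimod_map_zero _ _ _ _ hi,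
          bal_smul_zero, iMapF_zero]
      · rw [dif_neg hij]
  rw [hL, hR]
  calc ∑ i, ∑ j, ∑ l, (if h : i ≤ j then
          iMapF k n B A M N i j h (b.1 i l • i0 (Y.1 l j)) else 0)
      = ∑ i, ∑ l, ∑ j, (if h : i ≤ j then
          iMapF k n B A M N i j h (b.1 i l • i0 (Y.1 l j)) else 0) :=
        Finset.sum_congr rfl fun i _ => Finset.sum_comm
    _ = ∑ l, ∑ i, ∑ j, (if h : i ≤ j then
          iMapF k n B A M N i j h (b.1 i l • i0 (Y.1 l j)) else 0) := Finset.sum_comm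
    _ = ∑ l, ∑ j, ∑ i, (if h : i ≤ j then
          iMapF k n B A M N i j h (b.1 i l • i0 (Y.1 l j)) else 0) :=
        Finset.sum_congr rfl fun l _ => Finset.sum_comm

lemma iF_rsmul (b : ↥(upperTriangular k B n)) (Y : ↥(upperTriangular k B n)) :
    iF k n B A M N i0 (Y * b) = (op b) • iF k n B A M N i0 Y := by
  have hL : iF k n B A M N i0 (Y * b)
      = ∑ l, ∑ j', ∑ j, (if h : l ≤ j' then
          iMapF k n B A M N l j' h ((op (b.1 j j') : Bᵐᵒᵖ) • i0 (Y.1 l j)) else 0) := by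
    simp only [iF]
    refine Finset.sum_congr rfl fun l _ => Finset.sum_congr rfl fun j' _ => ?_
    by_cases h : l ≤ j'
    · rw [dif_pos h]
      have he : (Y * b).1 l j' = ∑ j, Y.1 l j * b.1 j j' := by
        rw [MulMemClass.coe_mul, Matrix.mul_apply]
      rw [he, bimod_map_sum _ _ _ _ hi, iMapF_sum]
      refine Finset.sum_congr rfl fun j _ => ?_
      rw [dif_pos h, show Y.1 l j * b.1 j j' = (op (b.1 j j') : Bᵐᵒᵖ) • (Y.1 l j) from rfl,
        hi.map_rsmul]
    · rw [dif_neg h]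
      symm
      exact Finset.sum_eq_zero fun j _ => dif_neg h
  have hR : (op b) • iF k n B A M N i0 Y
      = ∑ l, ∑ j, ∑ j', (if h : l ≤ j' then
          iMapF k n B A M N l j' h ((op (b.1 j j') : Bᵐᵒᵖ) • i0 (Y.1 l j)) else 0) := by
    simp only [iF]
    rw [tbal_rsmul_sum]
    refine Finset.sum_congr rfl fun l _ => ?_
    rw [tbal_rsmul_sum]
    refine Finset.sum_congr rfl fun j _ => ?_
    by_cases hlj : l ≤ j
    · rw [dif_pos hlj, rsmul_iMapF]
      refine Finset.sum_congr rfl fun j' _ => ?_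
      by_cases h : j ≤ j'
      · rw [dif_pos h, dif_pos (le_trans hlj h)]
      · rw [dif_neg h]
        by_cases hlj' : l ≤ j'
        · rw [dif_pos hlj', upt_apply k n b (not_le.1 h), op_zero, bal_zero_rsmul, iMapF_zero]
        · rw [dif_neg hlj']
    · rw [dif_neg hlj, tbal_rsmul_zero]
      symm
      refine Finset.sum_eq_zero fun j' _ => ?_
      by_cases hlj' : l ≤ j'
      · rw [dif_pos hlj', upt_apply k n Y (not_le.1 hlj), bimod_map_zero _ _ _ _ hi,
          bal_rsmul_zero, iMapF_zero]
      · rw [dif_neg hlj']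
  rw [hL, hR]
  exact Finset.sum_congr rfl fun l _ => Finset.sum_comm

lemma iF_isBimodHom :
    IsBimodHom (↥(upperTriangular k B n)) (↥(upperTriangular k B n))
      (↥(upperTriangular k B n))
      (BalTensor (↥(upperTriangular k A n)) (Tri k n M.X) (Tri k n N.X))
      (iF k n B A M N i0) := by
  refine ⟨iF_add k n B A M N i0 hi, ?_, ?_⟩
  · intro b Y
    rw [smul_eq_mul, iF_lsmul k n B A M N i0 hi]
  · intro c Y
    rw [MulOpposite.smul_eq_mul_unop, iF_rsmul k n B A M N i0 hi, MulOpposite.op_unop]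

end MainIF
section Final

variable (k : Type u) [Field k] (n : ℕ)
variable (B A : Type u) [Ring B] [Algebra k B] [Ring A] [Algebra k A]
variable (M : BimodData k B A) (N : BimodData k A B)
variable (i0 : B → BalTensor A M.X N.X) (hi : IsBimodHom B B B (BalTensor A M.X N.X) i0)
variable (p0 : BalTensor A M.X N.X → B) (hp : IsBimodHom B B (BalTensor A M.X N.X) B p0)

include hi in
lemma PF_iF (hpi : ∀ x, p0 (i0 x) = x) (Y : ↥(upperTriangular k B n)) :
    PF k n B A M N p0 hp (iF k n B A M N i0 Y) = Y := by
  simp only [iF]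
  rw [PF_sum]
  have step : ∀ i : Fin n, (PF k n B A M N p0 hp
      (∑ j, if h : i ≤ j then iMapF k n B A M N i j h (i0 (Y.1 i j)) else 0))
      = ∑ j, if h : i ≤ j then algUnit k n B i j h (Y.1 i j) else 0 := by
    intro i
    rw [PF_sum]
    refine Finset.sum_congr rfl fun j _ => ?_
    by_cases h : i ≤ j
    · rw [dif_pos h, dif_pos h, PF_iMapF, hpi]
    · rw [dif_neg h, dif_neg h, PF_zero]
  rw [Finset.sum_congr rfl fun i _ => step i]
  refine Subtype.ext <| funext fun r => funext fun s => ?_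
  rw [AddSubmonoidClass.coe_finset_sum, Matrix.sum_apply]
  have entry : ∀ i : Fin n, ((∑ j, if h : i ≤ j then algUnit k n B i j h (Y.1 i j)
      else 0 : ↥(upperTriangular k B n)) : Matrix (Fin n) (Fin n) B) r s
      = ∑ j, (if (r = i ∧ s = j) then Y.1 r s else 0) := by
    intro i
    rw [AddSubmonoidClass.coe_finset_sum, Matrix.sum_apply]
    refine Finset.sum_congr rfl fun j _ => ?_
    by_cases h : i ≤ j
    · rw [dif_pos h, algUnit_apply]
      by_cases hc : r = i ∧ s = j
      · obtain ⟨rfl, rfl⟩ := hc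
        rw [if_pos (⟨rfl, rfl⟩ : r = r ∧ s = s)]
      · rw [if_neg hc, if_neg hc]
    · rw [dif_neg h]
      show (0 : Matrix (Fin n) (Fin n) B) r s = _
      rw [Matrix.zero_apply]
      by_cases hc : r = i ∧ s = j
      · obtain ⟨rfl, rfl⟩ := hc
        rw [if_pos ⟨rfl, rfl⟩, upt_apply k n Y (not_le.1 h)]
      · rw [if_neg hc]
  rw [Finset.sum_congr rfl fun i _ => entry i]
  rw [Finset.sum_eq_single r]
  · rw [Finset.sum_eq_single s]
    · rw [if_pos ⟨rfl, rfl⟩]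
    · intro j _ hj
      rw [if_neg (fun hc => hj hc.2.symm)]
    · intro h; exact absurd (Finset.mem_univ s) h
  · intro i _ hi'
    exact Finset.sum_eq_zero fun j _ => if_neg (fun hc => hi' hc.1.symm)
  · intro h; exact absurd (Finset.mem_univ r) h

/-- The key step: `T_n` is monotone for the `≥_J` preorder. -/
lemma Jge_tri (h : Jge k B A) :
    Jge k (↥(upperTriangular k B n)) (↥(upperTriangular k A n)) := by
  obtain ⟨M, N, i0, p0, hi, hp, hpi⟩ := h
  refine ⟨{ X := Tri k n M.X }, { X := Tri k n N.X }, iF k n B A M N i0,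
    PF k n B A M N p0 hp, iF_isBimodHom k n B A M N i0 hi,
    PF_isBimodHom k n B A M N p0 hp, PF_iF k n B A M N i0 hi p0 hp hpi⟩

end Final
/-- If `A ≤_J B` then `T_n(A) ≤_J T_n(B)` for every positive `n`;
in particular `A ∼_J B` implies `T_n(A) ∼_J T_n(B)`. -/
theorem stmt14 (k A B : Type u) [Field k]
    [Ring A] [Algebra k A] [FiniteDimensional k A]
    [Ring B] [Algebra k B] [FiniteDimensional k B]
    (n : ℕ) (hn : 0 < n) (h : Jge k B A) :
    Jge k (↥(upperTriangular k B n)) (↥(upperTriangular k A n)) ∧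
    (Jequiv k A B →
      Jequiv k (↥(upperTriangular k A n)) (↥(upperTriangular k B n))) := by
  refine ⟨Jge_tri k n B A h, ?_⟩
  rintro ⟨h1, h2⟩
  exact ⟨Jge_tri k n A B h1, Jge_tri k n B A h2⟩

end

end JJ
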